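/- arXiv:1307.2689 — 2 statements merged into one kernel-verified Lean document; each statement's English description precedes it below -/
import Mathlib

section
/- Suppose in addition that R is a perfect field of characteristic 3. Then the endomorphism φ of St_{G₂}(R) determined by φ(S) = S′, φ(S′) = S, φ(X(t)) = X′(t³), φ(X′(t)) = X(t) for all t ∈ R is an automorphism (i.e. bijective). -/
/-! The exceptional diagram endomorphism of the Steinberg group of type `G₂` in
characteristic `3`. -/

namespace PaperAmalgams

open scoped commutatorElement

/-- Generators of the Steinberg group of type `G₂`: `S`, `S′` and the `X(t)`, `X′(t)`. -/
inductive G2Gen (R : Type*)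
  | S : G2Gen R
  | S' : G2Gen R
  | X : R → G2Gen R
  | X' : R → G2Gen R

/-- The defining relators of `St_{G₂}(R)` (in its simplified form, valid when `3 = 0` in
`R`); see the statement context for the list of relations. -/
def g2Rels (R : Type*) [CommRing R] : Set (FreeGroup (G2Gen R)) :=
  let S : FreeGroup (G2Gen R) := .of .S
  let S' : FreeGroup (G2Gen R) := .of .S'
  let X : R → FreeGroup (G2Gen R) := fun t => .of (.X t)
  let X' : R → FreeGroup (G2Gen R) := fun t => .of (.X' t)
  {S * S' * S * S' * S * S' * (S' * S * S' * S * S' * S)⁻¹,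
   S ^ 2 * S' * (S ^ 2)⁻¹ * S',
   S' ^ 2 * S * (S' ^ 2)⁻¹ * S,
   S * (X 1 * S * X 1 * S⁻¹ * X 1)⁻¹,
   S' * (X' 1 * S' * X' 1 * S'⁻¹ * X' 1)⁻¹} ∪
  (⋃ (t : R),
    {⁅S ^ 2, X t⁆,
     ⁅S' ^ 2, X' t⁆,
     S ^ 2 * X' t * (S ^ 2)⁻¹ * (X' (-t))⁻¹,
     S' ^ 2 * X t * (S' ^ 2)⁻¹ * (X (-t))⁻¹,
     ⁅S * S' * S * S' * S, X' t⁆,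
     ⁅S' * S * S' * S * S', X t⁆}) ∪
  (⋃ (t : R) (u : R),
    {X t * X u * (X (t + u))⁻¹,
     X' t * X' u * (X' (t + u))⁻¹,
     ⁅X' t, S' * S * X' u * S⁻¹ * S'⁻¹⁆,
     ⁅X t, S * S' * X u * S'⁻¹ * S⁻¹⁆,
     ⁅S * S' * X t * S'⁻¹ * S⁻¹, S' * S * X' u * S⁻¹ * S'⁻¹⁆,
     ⁅S * X' t * S⁻¹, S' * X u * S'⁻¹⁆,
     (X' t * (S * X' u * S⁻¹) * (X' t)⁻¹ * (S * X' u * S⁻¹)⁻¹) *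
       (S' * S * X' (t * u) * S⁻¹ * S'⁻¹)⁻¹,
     (X t * (S' * X u * S'⁻¹) * (X t)⁻¹ * (S' * X u * S'⁻¹)⁻¹) *
       (S * S' * X (t * u) * S'⁻¹ * S⁻¹)⁻¹,
     (X t * X' u * (X t)⁻¹ * (X' u)⁻¹) *
       ((S * S' * X (t ^ 2 * u) * S'⁻¹ * S⁻¹) *
        (S' * X (-(t * u)) * S'⁻¹) *
        (S * X' (t ^ 3 * u) * S⁻¹) *
        (S' * S * X' (-(t ^ 3 * u ^ 2)) * S⁻¹ * S'⁻¹))⁻¹})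

/-- The Steinberg group `St_{G₂}(R)` (presented form, for rings with `3 = 0`). -/
abbrev StG2 (R : Type*) [CommRing R] : Type _ := PresentedGroup (g2Rels R)

/-- The images of the generators in `St_{G₂}(R)`. -/
def StG2.gen {R : Type*} [CommRing R] (g : G2Gen R) : StG2 R := PresentedGroup.of g

end PaperAmalgams

section Aux

open PaperAmalgams

local instance g2Fact3 : Fact (Nat.Prime 3) := ⟨by norm_num⟩

variable (R : Type*) [Field R] [CharP R 3] [PerfectField R]

/-- The cube-root ring homomorphism (inverse Frobenius) on a perfect field of
characteristic `3`. -/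
noncomputable def g2CubeRoot : R →+* R := ((frobeniusEquiv R 3).symm : R ≃+* R)

variable {R}

lemma g2CubeRoot_pow (t : R) : g2CubeRoot R t ^ 3 = t := by
  have := frobenius_apply_frobeniusEquiv_symm (R := R) (p := 3) t
  simpa [frobenius_def, g2CubeRoot] using this

lemma g2CubeRoot_cube (t : R) : g2CubeRoot R (t ^ 3) = t := by
  have := frobeniusEquiv_symm_apply_frobenius (R := R) (p := 3) t
  simpa [frobenius_def, g2CubeRoot] using this

/-- The substitution on generators: take cube roots of all parameters. -/
noncomputable def g2Inv : G2Gen R → G2Gen R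
  | .S => .S
  | .S' => .S'
  | .X t => .X (g2CubeRoot R t)
  | .X' t => .X' (g2CubeRoot R t)

set_option maxHeartbeats 2000000 in
lemma g2Inv_maps_rels : ∀ r ∈ g2Rels R, FreeGroup.map g2Inv r ∈ g2Rels R := by
  intro r hr
  simp only [g2Rels, Set.mem_union, Set.mem_iUnion, Set.mem_insert_iff,
    Set.mem_singleton_iff] at hr
  obtain (((h | h | h | h | h) | ⟨t, (h | h | h | h | h | h)⟩) |
      ⟨t, u, (h | h | h | h | h | h | h | h | h)⟩) := hr <;>
    subst h <;>
    simp only [map_mul, map_inv, map_pow, map_commutatorElement, FreeGroup.map.of, g2Inv,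
      map_add, map_neg, map_one] <;>
    simp only [g2Rels, Set.mem_union, Set.mem_iUnion, Set.mem_insert_iff,
      Set.mem_singleton_iff] <;>
    first
      | (refine Or.inl (Or.inl ?_); simp; done)
      | (refine Or.inl (Or.inr ⟨g2CubeRoot R t, ?_⟩); simp; done)
      | (refine Or.inr ⟨g2CubeRoot R t, g2CubeRoot R u, ?_⟩; simp; done)

lemma g2_mk_rel {r : FreeGroup (G2Gen R)} (hr : r ∈ g2Rels R) :
    PresentedGroup.mk (g2Rels R) r = 1 :=
  (QuotientGroup.eq_one_iff r).mpr (Subgroup.subset_normalClosure hr)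

lemma g2_lift_rels : ∀ r ∈ g2Rels R,
    FreeGroup.lift (fun g => (StG2.gen (g2Inv g) : StG2 R)) r = 1 := by
  have key : (FreeGroup.lift (fun g => (StG2.gen (g2Inv g) : StG2 R))) =
      (PresentedGroup.mk (g2Rels R)).comp (FreeGroup.map g2Inv) := by
    refine FreeGroup.ext_hom _ _ fun a => ?_
    simp only [FreeGroup.lift_apply_of, MonoidHom.comp_apply, FreeGroup.map.of]
    rfl
  intro r hr
  rw [key, MonoidHom.comp_apply]
  exact g2_mk_rel (g2Inv_maps_rels r hr)

end Aux

open PaperAmalgams in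
/-- If `R` is a perfect field of characteristic `3`, then the endomorphism of
`St_{G₂}(R)` determined by `S ↔ S′`, `X′(t) ↦ X(t) ↦ X′(t³)` is an automorphism. -/
theorem g2_diagram_endomorphism_bijective (R : Type*) [Field R] [CharP R 3]
    [PerfectField R] (φ : StG2 R →* StG2 R)
    (hS : φ (StG2.gen G2Gen.S) = StG2.gen G2Gen.S')
    (hS' : φ (StG2.gen G2Gen.S') = StG2.gen G2Gen.S)
    (hX : ∀ t : R, φ (StG2.gen (G2Gen.X t)) = StG2.gen (G2Gen.X' (t ^ 3)))
    (hX' : ∀ t : R, φ (StG2.gen (G2Gen.X' t)) = StG2.gen (G2Gen.X t)) :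
    Function.Bijective φ := by
  -- The inverse of `φ ∘ φ`, built from the cube-root substitution on generators.
  set ψ : StG2 R →* StG2 R := PresentedGroup.toGroup g2_lift_rels with hψdef
  have hψ : ∀ g : G2Gen R, ψ (StG2.gen g) = StG2.gen (g2Inv g) := fun g =>
    PresentedGroup.toGroup.of g2_lift_rels
  set θ : StG2 R →* StG2 R := φ.comp φ with hθdef
  have hψθ : ψ.comp θ = MonoidHom.id (StG2 R) := by
    refine PresentedGroup.ext fun x => ?_
    cases x with
    | S =>
      show ψ (φ (φ (StG2.gen G2Gen.S))) = StG2.gen G2Gen.S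
      rw [hS, hS', hψ]; rfl
    | S' =>
      show ψ (φ (φ (StG2.gen G2Gen.S'))) = StG2.gen G2Gen.S'
      rw [hS', hS, hψ]; rfl
    | X t =>
      show ψ (φ (φ (StG2.gen (G2Gen.X t)))) = StG2.gen (G2Gen.X t)
      rw [hX, hX', hψ]
      show StG2.gen (G2Gen.X (g2CubeRoot R (t ^ 3))) = _
      rw [g2CubeRoot_cube]
    | X' t =>
      show ψ (φ (φ (StG2.gen (G2Gen.X' t)))) = StG2.gen (G2Gen.X' t)
      rw [hX', hX, hψ]
      show StG2.gen (G2Gen.X' (g2CubeRoot R (t ^ 3))) = _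
      rw [g2CubeRoot_cube]
  have hθψ : θ.comp ψ = MonoidHom.id (StG2 R) := by
    refine PresentedGroup.ext fun x => ?_
    cases x with
    | S =>
      show φ (φ (ψ (StG2.gen G2Gen.S))) = StG2.gen G2Gen.S
      rw [hψ]
      show φ (φ (StG2.gen G2Gen.S)) = _
      rw [hS, hS']
    | S' =>
      show φ (φ (ψ (StG2.gen G2Gen.S'))) = StG2.gen G2Gen.S'
      rw [hψ]
      show φ (φ (StG2.gen G2Gen.S')) = _
      rw [hS', hS]
    | X t =>
      show φ (φ (ψ (StG2.gen (G2Gen.X t)))) = StG2.gen (G2Gen.X t)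
      rw [hψ]
      show φ (φ (StG2.gen (G2Gen.X (g2CubeRoot R t)))) = _
      rw [hX, hX', g2CubeRoot_pow]
    | X' t =>
      show φ (φ (ψ (StG2.gen (G2Gen.X' t)))) = StG2.gen (G2Gen.X' t)
      rw [hψ]
      show φ (φ (StG2.gen (G2Gen.X' (g2CubeRoot R t)))) = _
      rw [hX', hX, g2CubeRoot_pow]
  have hli : Function.LeftInverse ψ θ := fun x => DFunLike.congr_fun hψθ x
  have hri : Function.RightInverse ψ θ := fun x => DFunLike.congr_fun hθψ x
  have hbij : Function.Bijective (φ ∘ φ) := by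
    have : ⇑θ = φ ∘ φ := rfl
    exact this ▸ ⟨hli.injective, hri.surjective⟩
  exact ⟨Function.Injective.of_comp hbij.1, Function.Surjective.of_comp hbij.2⟩
end

section
/- Suppose there exist finitely many units u₁, …, u_n ∈ Rˣ such that R is finitely generated as a module over the subring of R generated by {u₁, u₁⁻¹, …, u_n, u_n⁻¹}. Then the group St_{A₁}(R) is finitely generated. -/
/-! Finite generation of the Steinberg group of type `A₁`. -/

namespace PaperAmalgams

open scoped commutatorElement

/-- Generators: `S` and the `X(t)`, `t ∈ R`. -/
inductive A1Gen (R : Type*)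
  | S : A1Gen R
  | X : R → A1Gen R

variable {R : Type*} [CommRing R]

/-- The word `s̃(r) = X(r) ⬝ S X(r⁻¹) S⁻¹ ⬝ X(r)` in the free group. -/
def sTilde (r : Rˣ) : FreeGroup (A1Gen R) :=
  .of (.X (r : R)) * .of .S * .of (.X ((r⁻¹ : Rˣ) : R)) * (FreeGroup.of .S)⁻¹ *
    .of (.X (r : R))

/-- The word `h̃(r) = s̃(r) s̃(−1)` in the free group. -/
def hTilde (r : Rˣ) : FreeGroup (A1Gen R) := sTilde r * sTilde (-1)

/-- The defining relators of `St_{A₁}(R)`: for all `t, u ∈ R` and `r ∈ Rˣ`,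
`X(t) X(u) = X(t+u)`; `S² ⇄ X(t)`; `S = X(1) S X(1) S⁻¹ X(1)`;
`h̃(r) X(t) h̃(r)⁻¹ = X(r² t)`; `h̃(r) ⬝ S X(t) S⁻¹ ⬝ h̃(r)⁻¹ = S X(r⁻² t) S⁻¹`. -/
def a1Rels (R : Type*) [CommRing R] : Set (FreeGroup (A1Gen R)) :=
  let S : FreeGroup (A1Gen R) := .of .S
  let X : R → FreeGroup (A1Gen R) := fun t => .of (.X t)
  (⋃ (t : R) (u : R), {X t * X u * (X (t + u))⁻¹}) ∪
  (⋃ (t : R), {⁅S ^ 2, X t⁆}) ∪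
  {S * (X 1 * S * X 1 * S⁻¹ * X 1)⁻¹} ∪
  (⋃ (r : Rˣ) (t : R),
    {hTilde r * X t * (hTilde r)⁻¹ * (X ((r : R) ^ 2 * t))⁻¹,
     hTilde r * (S * X t * S⁻¹) * (hTilde r)⁻¹ *
       (S * X (((r⁻¹ : Rˣ) : R) ^ 2 * t) * S⁻¹)⁻¹})

/-- The Steinberg group `St_{A₁}(R)`. -/
abbrev StA1 (R : Type*) [CommRing R] : Type _ := PresentedGroup (a1Rels R)

end PaperAmalgams

namespace StA1Aux

open PaperAmalgams

variable {R : Type*} [CommRing R]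

/-- The image of `X(t)` in the Steinberg group. -/
abbrev Xg (t : R) : StA1 R := PresentedGroup.mk (a1Rels R) (FreeGroup.of (A1Gen.X t))

/-- The image of `S` in the Steinberg group. -/
abbrev Sg (R : Type*) [CommRing R] : StA1 R :=
  PresentedGroup.mk (a1Rels R) (FreeGroup.of A1Gen.S)

lemma rel_eq_one {w : FreeGroup (A1Gen R)} (hw : w ∈ a1Rels R) :
    PresentedGroup.mk (a1Rels R) w = 1 :=
  (QuotientGroup.eq_one_iff w).mpr (Subgroup.subset_normalClosure hw)

lemma Xg_mul (t u : R) : Xg t * Xg u = Xg (t + u) := by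
  have hw : FreeGroup.of (A1Gen.X t) * FreeGroup.of (A1Gen.X u) *
      (FreeGroup.of (A1Gen.X (t + u)))⁻¹ ∈ a1Rels R := by
    simp only [a1Rels, Set.mem_union, Set.mem_iUnion, Set.mem_singleton_iff,
      Set.mem_insert_iff]
    exact Or.inl (Or.inl (Or.inl ⟨t, u, rfl⟩))
  have h := rel_eq_one hw
  rw [map_mul, map_mul, map_inv] at h
  exact mul_inv_eq_one.mp h

lemma Xg_zero : Xg (0 : R) = 1 := by
  have h : Xg (0 : R) * Xg (0 : R) = 1 * Xg (0 : R) := by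
    rw [Xg_mul, add_zero, one_mul]
  exact mul_right_cancel h

lemma Xg_neg (t : R) : Xg (-t) = (Xg t)⁻¹ :=
  eq_inv_of_mul_eq_one_left (by rw [Xg_mul, neg_add_cancel, Xg_zero])

lemma Xg_conj (r : Rˣ) (t : R) :
    PresentedGroup.mk (a1Rels R) (hTilde r) * Xg t *
      (PresentedGroup.mk (a1Rels R) (hTilde r))⁻¹ = Xg ((r : R) ^ 2 * t) := by
  have hw : hTilde r * FreeGroup.of (A1Gen.X t) * (hTilde r)⁻¹ *
      (FreeGroup.of (A1Gen.X ((r : R) ^ 2 * t)))⁻¹ ∈ a1Rels R := by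
    simp only [a1Rels, Set.mem_union, Set.mem_iUnion, Set.mem_singleton_iff,
      Set.mem_insert_iff]
    exact Or.inr ⟨r, t, Or.inl rfl⟩
  have h := rel_eq_one hw
  rw [map_mul, map_mul, map_mul, map_inv, map_inv] at h
  exact mul_inv_eq_one.mp h

lemma hTilde_mem (H : Subgroup (StA1 R)) (r : Rˣ) (hS : Sg R ∈ H)
    (h1 : Xg ((r : R)) ∈ H) (h2 : Xg (((r⁻¹ : Rˣ)) : R) ∈ H)
    (h3 : Xg ((-1 : R)) ∈ H) :
    PresentedGroup.mk (a1Rels R) (hTilde r) ∈ H := by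
  have e1 : (((-1 : Rˣ)⁻¹ : Rˣ) : R) = -1 := by simp
  have e2 : (((-1 : Rˣ)) : R) = -1 := by simp
  have expand : PresentedGroup.mk (a1Rels R) (hTilde r) =
      (Xg ((r : R)) * Sg R * Xg (((r⁻¹ : Rˣ)) : R) * (Sg R)⁻¹ * Xg ((r : R))) *
      (Xg (-1 : R) * Sg R * Xg (-1 : R) * (Sg R)⁻¹ * Xg (-1 : R)) := by
    simp only [hTilde, sTilde, map_mul, map_inv, e1, e2]
  rw [expand]
  exact mul_mem (mul_mem (mul_mem (mul_mem (mul_mem h1 hS) h2) (inv_mem hS)) h1)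
    (mul_mem (mul_mem (mul_mem (mul_mem h3 hS) h3) (inv_mem hS)) h3)

end StA1Aux

open PaperAmalgams in
/-- If `R` is finitely generated as a module over a subring generated by finitely many
units (and their inverses), then `St_{A₁}(R)` is finitely generated. -/
theorem stA1_fg_of_module_finite_over_units {R : Type*} [CommRing R]
    (s : Finset Rˣ)
    (hfin : Module.Finite
      (Subring.closure ((fun u : Rˣ => (u : R)) '' s ∪ (fun u : Rˣ => ((u⁻¹ : Rˣ) : R)) '' s))
      R) :
    Group.FG (StA1 R) := by
  classical
  open StA1Aux in
  obtain ⟨M, hM⟩ := hfin.fg_top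
  set A := Subring.closure
      ((fun u : Rˣ => (u : R)) '' s ∪ (fun u : Rˣ => ((u⁻¹ : Rˣ) : R)) '' s) with hAdef
  set A2 : Subring R := Subring.closure
      ((fun u : Rˣ => ((u : R)) ^ 2) '' s ∪ (fun u : Rˣ => (((u⁻¹ : Rˣ) : R)) ^ 2) '' s)
    with hA2def
  set V : Finset R := s.powerset.image (fun t => ∏ x ∈ t, ((x : Rˣ) : R)) with hVdef
  set Ms : Finset R := M ∪ {1, -1} with hMsdef
  set T : Set (StA1 R) :=
      ({Sg R} ∪ (fun p : R × R => Xg (p.1 * p.2)) '' ((V : Set R) ×ˢ (Ms : Set R)))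
        ∪ (fun u : Rˣ => Xg ((u⁻¹ : Rˣ) : R)) '' (s : Set Rˣ) with hTdef
  have hTfin : T.Finite :=
    (((Set.finite_singleton _).union ((V.finite_toSet.prod Ms.finite_toSet).image _)).union
      (s.finite_toSet.image _))
  set H : Subgroup (StA1 R) := Subgroup.closure T with hHdef
  -- basic membership facts
  have hSg : Sg R ∈ H := Subgroup.subset_closure (Or.inl (Or.inl rfl))
  have hVM : ∀ v ∈ V, ∀ m ∈ Ms, Xg (v * m) ∈ H := fun v hv m hm =>
    Subgroup.subset_closure (Or.inl (Or.inr ⟨(v, m), ⟨hv, hm⟩, rfl⟩))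
  have h1V : (1 : R) ∈ V :=
    Finset.mem_image.mpr ⟨∅, Finset.empty_mem_powerset _, by simp⟩
  have h1Ms : (1 : R) ∈ Ms := by simp [hMsdef]
  have hneg1Ms : (-1 : R) ∈ Ms := by simp [hMsdef]
  have hXgneg1 : Xg (-1 : R) ∈ H := by
    have := hVM 1 h1V (-1) hneg1Ms; rwa [one_mul] at this
  have huV : ∀ u ∈ s, ((u : Rˣ) : R) ∈ V := fun u hu =>
    Finset.mem_image.mpr ⟨{u}, Finset.mem_powerset.mpr (Finset.singleton_subset_iff.mpr hu),
      by simp⟩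
  have hXu : ∀ u ∈ s, Xg ((u : R)) ∈ H := fun u hu => by
    have := hVM _ (huV u hu) 1 h1Ms; rwa [mul_one] at this
  have hXuinv : ∀ u ∈ s, Xg ((u⁻¹ : Rˣ) : R) ∈ H := fun u hu =>
    Subgroup.subset_closure (Or.inr ⟨u, hu, rfl⟩)
  -- the set of t with Xg t ∈ H, as an additive subgroup
  set K : AddSubgroup R :=
    { carrier := {t : R | Xg t ∈ H}
      zero_mem' := by simpa [Xg_zero] using (one_mem H)
      add_mem' := fun {a b} ha hb => by
        simpa [← Xg_mul] using mul_mem (show Xg a ∈ H from ha) (show Xg b ∈ H from hb)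
      neg_mem' := fun {a} ha => by
        simpa [Xg_neg] using inv_mem (show Xg a ∈ H from ha) } with hKdef
  have hKmem : ∀ t : R, t ∈ K ↔ Xg t ∈ H := fun _ => Iff.rfl
  have hconj : ∀ r : Rˣ, Xg ((r : R)) ∈ H → Xg ((r⁻¹ : Rˣ) : R) ∈ H →
      ∀ t ∈ K, ((r : R) ^ 2 * t) ∈ K := by
    intro r h1 h2 t ht
    have hh := StA1Aux.hTilde_mem H r hSg h1 h2 hXgneg1
    rw [hKmem, ← Xg_conj r t]
    exact mul_mem (mul_mem hh ((hKmem t).mp ht)) (inv_mem hh)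
  have hsq : ∀ u ∈ s, ∀ t ∈ K, ((u : R) ^ 2 * t) ∈ K := fun u hu =>
    hconj u (hXu u hu) (hXuinv u hu)
  have hsqinv : ∀ u ∈ s, ∀ t ∈ K, (((u⁻¹ : Rˣ) : R) ^ 2 * t) ∈ K := fun u hu => by
    have h2 : Xg (((u⁻¹)⁻¹ : Rˣ) : R) ∈ H := by rw [inv_inv]; exact hXu u hu
    exact hconj u⁻¹ (hXuinv u hu) h2
  -- multiplication by elements of A2 preserves K
  have hA2K : ∀ b ∈ A2, ∀ t ∈ K, b * t ∈ K := by
    intro b hb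
    induction hb using Subring.closure_induction with
    | mem x hx =>
      rcases hx with ⟨u, hu, rfl⟩ | ⟨u, hu, rfl⟩
      · exact hsq u hu
      · exact hsqinv u hu
    | zero => intro t _; rw [zero_mul]; exact K.zero_mem
    | one => intro t ht; rwa [one_mul]
    | add x y _ _ px py =>
      intro t ht; rw [add_mul]; exact K.add_mem (px t ht) (py t ht)
    | neg x _ px => intro t ht; rw [neg_mul]; exact K.neg_mem (px t ht)
    | mul x y _ _ px py =>
      intro t ht; rw [mul_assoc]; exact px _ (py t ht)
  -- the additive subgroup generated by A2 * V * Ms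
  set gens : Set R := {x : R | ∃ b ∈ A2, ∃ v ∈ V, ∃ m ∈ Ms, x = b * (v * m)} with hgensdef
  set K1 : AddSubgroup R := AddSubgroup.closure gens with hK1def
  have hK1K : ∀ x ∈ K1, x ∈ K := by
    intro x hx
    refine AddSubgroup.closure_induction ?_ ?_ ?_ ?_ hx
    · rintro y ⟨b, hb, v, hv, m, hm, rfl⟩
      exact hA2K b hb _ ((hKmem _).mpr (hVM v hv m hm))
    · exact K.zero_mem
    · exact fun a b _ _ ha hb => K.add_mem ha hb
    · exact fun a _ ha => K.neg_mem ha
  have hA2K1 : ∀ b ∈ A2, ∀ x ∈ K1, b * x ∈ K1 := by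
    intro b hb x hx
    refine AddSubgroup.closure_induction ?_ ?_ ?_ ?_ hx
    · rintro y ⟨b', hb', v, hv, m, hm, rfl⟩
      exact AddSubgroup.subset_closure
        ⟨b * b', A2.mul_mem hb hb', v, hv, m, hm, (mul_assoc _ _ _).symm⟩
    · rw [mul_zero]; exact K1.zero_mem
    · intro a c _ _ pa pc; rw [mul_add]; exact K1.add_mem pa pc
    · intro a _ pa; rw [mul_neg]; exact K1.neg_mem pa
  have hmulu : ∀ u ∈ s, ∀ x ∈ K1, (u : R) * x ∈ K1 := by
    intro u hu x hx
    refine AddSubgroup.closure_induction ?_ ?_ ?_ ?_ hx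
    · rintro y ⟨b, hb, v, hv, m, hm, rfl⟩
      obtain ⟨t, hts, rfl⟩ := Finset.mem_image.mp hv
      have hts' : t ⊆ s := Finset.mem_powerset.mp hts
      by_cases hut : u ∈ t
      · refine AddSubgroup.subset_closure
          ⟨(u : R) ^ 2 * b,
            A2.mul_mem (Subring.subset_closure (Or.inl ⟨u, hu, rfl⟩)) hb,
            ∏ x ∈ t.erase u, ((x : Rˣ) : R),
            Finset.mem_image.mpr ⟨t.erase u,
              Finset.mem_powerset.mpr ((Finset.erase_subset _ _).trans hts'), rfl⟩,
            m, hm, ?_⟩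
        have hpe := Finset.mul_prod_erase t (fun x => ((x : Rˣ) : R)) hut
        rw [← hpe]; ring
      · refine AddSubgroup.subset_closure
          ⟨b, hb, ∏ x ∈ insert u t, ((x : Rˣ) : R),
            Finset.mem_image.mpr ⟨insert u t,
              Finset.mem_powerset.mpr (Finset.insert_subset hu hts'), rfl⟩,
            m, hm, ?_⟩
        rw [Finset.prod_insert hut]; ring
    · rw [mul_zero]; exact K1.zero_mem
    · intro a c _ _ pa pc; rw [mul_add]; exact K1.add_mem pa pc
    · intro a _ pa; rw [mul_neg]; exact K1.neg_mem pa
  have huinvmul : ∀ u ∈ s, ∀ x ∈ K1, ((u⁻¹ : Rˣ) : R) * x ∈ K1 := by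
    intro u hu x hx
    have key : ((u⁻¹ : Rˣ) : R) * x = ((u⁻¹ : Rˣ) : R) ^ 2 * ((u : R) * x) := by
      rw [pow_two, mul_assoc, ← mul_assoc ((u⁻¹ : Rˣ) : R) ((u : R)) x,
        Units.inv_mul, one_mul]
    rw [key]
    exact hA2K1 _ (Subring.subset_closure (Or.inr ⟨u, hu, rfl⟩)) _ (hmulu u hu x hx)
  have hAK1 : ∀ a ∈ A, ∀ x ∈ K1, a * x ∈ K1 := by
    intro a ha
    induction ha using Subring.closure_induction with
    | mem y hy =>
      rcases hy with ⟨u, hu, rfl⟩ | ⟨u, hu, rfl⟩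
      · exact hmulu u hu
      · exact huinvmul u hu
    | zero => intro x _; rw [zero_mul]; exact K1.zero_mem
    | one => intro x hx; rwa [one_mul]
    | add x y _ _ px py =>
      intro z hz; rw [add_mul]; exact K1.add_mem (px z hz) (py z hz)
    | neg x _ px => intro z hz; rw [neg_mul]; exact K1.neg_mem (px z hz)
    | mul x y _ _ px py => intro z hz; rw [mul_assoc]; exact px _ (py z hz)
  have hMK1 : ∀ m ∈ Ms, m ∈ K1 := fun m hm =>
    AddSubgroup.subset_closure ⟨1, one_mem A2, 1, h1V, m, hm, by ring⟩
  have hRK1 : ∀ r : R, r ∈ K1 := by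
    intro r
    have hr : r ∈ Submodule.span A ((M : Set R)) := by rw [hM]; exact Submodule.mem_top
    refine Submodule.span_induction ?_ ?_ ?_ ?_ hr
    · intro x hx
      exact hMK1 x (Finset.mem_union_left _ hx)
    · exact K1.zero_mem
    · intro x y _ _ hx hy; exact K1.add_mem hx hy
    · intro a x _ hx
      have : (a : R) * x ∈ K1 := hAK1 (a : R) a.2 x hx
      simpa [Subring.smul_def] using this
  have hXall : ∀ t : R, Xg t ∈ H := fun t => (hKmem t).mp (hK1K t (hRK1 t))
  refine Group.fg_iff.mpr ⟨T, ?_, hTfin⟩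
  rw [← hHdef, eq_top_iff]
  intro x _
  refine PresentedGroup.generated_by _ H ?_ x
  intro j
  cases j with
  | S => exact hSg
  | X t => exact hXall t
end
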